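/- Let P be a directed set with calibre (ω₁,ω₁,ω,ω): every uncountable subset of P contains an uncountable subset S such that every infinite subset of S contains an infinite subset bounded in P. Then P is productively calibre (ω₁,ω): for every directed set Q with calibre (ω₁,ω), the product P × Q with the coordinatewise order has calibre (ω₁,ω). -/
import Mathlib


open Cardinal Set

/-- A directed set has calibre `(ω₁,ω)` if every uncountable subset contains an
infinite subset which is bounded (has an upper bound). -/
def CalibreO1O (P : Type*) [Preorder P] : Prop :=
  ∀ S : Set P, ¬ S.Countable → ∃ T ⊆ S, T.Infinite ∧ BddAbove T

/-- a directed set with calibre `(ω₁,ω₁,ω,ω)` is productively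
calibre `(ω₁,ω)`: its product with any calibre `(ω₁,ω)` directed set again has
calibre `(ω₁,ω)`. -/
theorem calibre_om1om1omom_productive {P : Type u} [PartialOrder P]
    (hPdir : ∀ F : Set P, F.Finite → BddAbove F)
    (hcal : ∀ S : Set P, ¬ S.Countable → ∃ T ⊆ S, ¬ T.Countable ∧
      ∀ U ⊆ T, U.Infinite → ∃ V ⊆ U, V.Infinite ∧ BddAbove V) :
    ∀ (Q : Type v) [PartialOrder Q],
      (∀ F : Set Q, F.Finite → BddAbove F) →
      CalibreO1O Q → CalibreO1O (P × Q) := by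
  intro Q _ hQdir hQcal S hS
  have hSinf : S.Infinite := fun h => hS h.countable
  obtain ⟨⟨p0, q0⟩, -⟩ := hSinf.nonempty
  haveI : Nonempty P := ⟨p0⟩
  haveI : Nonempty Q := ⟨q0⟩
  by_cases hfib : ∃ p, ¬ ({q | (p, q) ∈ S}).Countable
  · obtain ⟨p, hp⟩ := hfib
    obtain ⟨T, hTsub, hTinf, b, hb⟩ := hQcal _ hp
    refine ⟨(fun q => (p, q)) '' T, ?_, ?_, ⟨(p, b), ?_⟩⟩
    · rintro x ⟨q, hq, rfl⟩; exact hTsub hq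
    · exact hTinf.image (fun a _ c _ h => congrArg Prod.snd h)
    · rintro x ⟨q, hq, rfl⟩; exact ⟨le_refl p, hb hq⟩
  · push_neg at hfib
    have hfst : ¬ (Prod.fst '' S).Countable := by
      intro hc
      apply hS
      have hsub : S ⊆ ⋃ p ∈ Prod.fst '' S, (fun q => (p, q)) '' {q | (p, q) ∈ S} := by
        rintro ⟨p, q⟩ hpq
        exact Set.mem_biUnion ⟨⟨p, q⟩, hpq, rfl⟩ ⟨q, hpq, rfl⟩
      exact Set.Countable.mono hsub (hc.biUnion fun p _ => (hfib p).image _)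
    obtain ⟨T, hTsub, hTunc, hT⟩ := hcal _ hfst
    have hg : ∀ p ∈ T, ∃ q, (p, q) ∈ S := by
      intro p hp
      obtain ⟨⟨p', q⟩, hmem, rfl⟩ := hTsub hp
      exact ⟨q, hmem⟩
    choose! g hgS using hg
    by_cases hgc : (g '' T).Countable
    · have hex : ∃ q ∈ g '' T, ¬ ({p ∈ T | g p = q}).Countable := by
        by_contra h
        push_neg at h
        apply hTunc
        have hsub : T ⊆ ⋃ q ∈ g '' T, {p ∈ T | g p = q} := fun p hp =>
          Set.mem_biUnion ⟨p, hp, rfl⟩ ⟨hp, rfl⟩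
        exact Set.Countable.mono hsub (hgc.biUnion h)
      obtain ⟨q, hq, hA⟩ := hex
      have hAinf : ({p ∈ T | g p = q}).Infinite := fun h => hA h.countable
      obtain ⟨V, hVsub, hVinf, b, hb⟩ := hT _ (fun p hp => hp.1) hAinf
      refine ⟨(fun p => (p, q)) '' V, ?_, ?_, ⟨(b, q), ?_⟩⟩
      · rintro x ⟨p, hp, rfl⟩
        have h2 := hVsub hp
        rw [← h2.2]
        exact hgS p h2.1
      · exact hVinf.image (fun a _ c _ h => congrArg Prod.fst h)
      · rintro x ⟨p, hp, rfl⟩; exact ⟨hb hp, le_refl q⟩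
    · obtain ⟨T', hT'sub, hT'inf, bq, hbq⟩ := hQcal _ hgc
      have hf : ∀ q ∈ T', ∃ p, p ∈ T ∧ g p = q := by
        intro q hq
        obtain ⟨p, hp, rfl⟩ := hT'sub hq
        exact ⟨p, hp, rfl⟩
      choose! f hfT hfg using hf
      have hUsub : f '' T' ⊆ T := by rintro p ⟨q, hq, rfl⟩; exact hfT q hq
      have hUinf : (f '' T').Infinite := hT'inf.image (fun a ha c hc h => by
        rw [← hfg a ha, ← hfg c hc, h])
      obtain ⟨V, hVsub, hVinf, bp, hbp⟩ := hT _ hUsub hUinf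
      refine ⟨(fun p => (p, g p)) '' V, ?_, ?_, ⟨(bp, bq), ?_⟩⟩
      · rintro x ⟨p, hp, rfl⟩; exact hgS p (hUsub (hVsub hp))
      · exact hVinf.image (fun a _ c _ h => congrArg Prod.fst h)
      · rintro x ⟨p, hp, rfl⟩
        obtain ⟨q, hq, hfq⟩ := hVsub hp
        have hgp : g p = q := by rw [← hfq]; exact hfg q hq
        refine ⟨hbp hp, ?_⟩
        show g p ≤ bq
        rw [hgp]; exact hbq hq
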